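/- Let F : subdist → subdist be an additive map (the semantics of a loop body composed with restriction to B), i.e., F(μ) = ⟦C⟧(μ↓B). Define W(μ) = Σ_{i=0}^∞ (F^i(μ))↓¬B. If each ⟦C⟧ is mass-nonincreasing, then W(μ) is a well-defined subdistribution (the infinite sum converges pointwise and has total mass ≤ mass of μ), and W satisfies the fixed-point equation W(μ) = μ↓¬B + W(F(μ)). -/

import Mathlib

open scoped ENNReal
open Classical in
noncomputable def restrict {S : Type*} (μ : S → ℝ≥0∞) (B : S → Prop) : S → ℝ≥0∞ :=
  fun s => if B s then μ s else 0

set_option maxHeartbeats 1000000 in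
/-- For `F μ = ⟦C⟧(μ↓B)` with `⟦C⟧` additive and mass-nonincreasing, the sum
`W(μ) = Σᵢ (Fⁱ μ)↓¬B` has total mass at most that of `μ` (so `W μ` is a
subdistribution), and satisfies `W(μ) = μ↓¬B + W(F μ)`. -/
theorem stmt5 {S : Type*} [Countable S]
    (C : (S → ℝ≥0∞) → (S → ℝ≥0∞))
    (hadd : ∀ μ ν, C (μ + ν) = C μ + C ν)
    (hmass : ∀ μ : S → ℝ≥0∞, ∑' s, C μ s ≤ ∑' s, μ s)
    (B : S → Prop) (μ : S → ℝ≥0∞) (hμ : ∑' s, μ s ≤ 1) :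
    (∑' s, ∑' i : ℕ,
        restrict ((fun ν => C (restrict ν B))^[i] μ) (fun s => ¬ B s) s) ≤ ∑' s, μ s ∧
    (fun s => ∑' i : ℕ,
        restrict ((fun ν => C (restrict ν B))^[i] μ) (fun s => ¬ B s) s)
      = fun s => restrict μ (fun s => ¬ B s) s + ∑' i : ℕ,
          restrict ((fun ν => C (restrict ν B))^[i] (C (restrict μ B)))
            (fun s => ¬ B s) s := by
  classical
  set F : (S → ℝ≥0∞) → (S → ℝ≥0∞) := fun ν => C (restrict ν B) with hF
  have key : ∀ ν : S → ℝ≥0∞,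
      (∑' s, restrict ν (fun s => ¬ B s) s) + ∑' s, F ν s ≤ ∑' s, ν s := by
    intro ν
    have h1 : (∑' s, F ν s) ≤ ∑' s, restrict ν B s := hmass _
    have h2 : (∑' s, restrict ν (fun s => ¬ B s) s) + ∑' s, restrict ν B s
        = ∑' s, ν s := by
      rw [← ENNReal.tsum_add]
      refine tsum_congr fun s => ?_
      by_cases hb : B s <;> simp [restrict, hb]
    calc (∑' s, restrict ν (fun s => ¬ B s) s) + ∑' s, F ν s
        ≤ (∑' s, restrict ν (fun s => ¬ B s) s) + ∑' s, restrict ν B s :=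
          add_le_add_right h1 _
      _ = ∑' s, ν s := h2
  have hpart : ∀ n : ℕ,
      (∑ i ∈ Finset.range n, ∑' s, restrict (F^[i] μ) (fun s => ¬ B s) s)
        + ∑' s, F^[n] μ s ≤ ∑' s, μ s := by
    intro n
    induction n with
    | zero => simp
    | succ n ih =>
      rw [Finset.sum_range_succ, Function.iterate_succ_apply']
      calc (∑ i ∈ Finset.range n, ∑' s, restrict (F^[i] μ) (fun s => ¬ B s) s)
            + (∑' s, restrict (F^[n] μ) (fun s => ¬ B s) s) + ∑' s, F (F^[n] μ) s
          = (∑ i ∈ Finset.range n, ∑' s, restrict (F^[i] μ) (fun s => ¬ B s) s)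
            + ((∑' s, restrict (F^[n] μ) (fun s => ¬ B s) s)
              + ∑' s, F (F^[n] μ) s) := by ring
        _ ≤ (∑ i ∈ Finset.range n, ∑' s, restrict (F^[i] μ) (fun s => ¬ B s) s)
            + ∑' s, F^[n] μ s := add_le_add_right (key _) _
        _ ≤ ∑' s, μ s := ih
  constructor
  · rw [ENNReal.tsum_comm]
    rw [ENNReal.tsum_eq_iSup_nat]
    refine iSup_le fun n => ?_
    exact le_trans (le_add_right le_rfl) (hpart n)
  · funext s
    rw [tsum_eq_zero_add' (f := fun i : ℕ => restrict (F^[i] μ) (fun s => ¬ B s) s)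
      ENNReal.summable]
    simp only [Function.iterate_zero_apply]
    congr 1
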